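/- For all integers n ≥ 1 and k ≥ 1 the following identity of polynomials in β with rational coefficients holds: C(n+k−1, k) · Σ_{j=0}^{k−1} (k/(n+j)) · C(k−1, j) · β^j = Σ_{j=0}^{k−1} C(n+j−1, j) · (1+β)^j. -/

import Mathlib

lemma binom_expand19 (k : ℕ) : (1 + Polynomial.X : Polynomial ℚ) ^ k =
    ∑ j ∈ Finset.range (k+1), Polynomial.C ((k.choose j : ℚ)) * Polynomial.X ^ j := by
  rw [add_comm, add_pow]
  refine Finset.sum_congr rfl fun j _ => ?_
  simp [Polynomial.C_eq_natCast, mul_comm]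

lemma key19 (n k j : ℕ) (hn : 1 ≤ n) (hj : j ≤ k) :
    ((n+k).choose (k+1) : ℚ) * (((k:ℚ)+1)/((n:ℚ)+j) * ((k).choose j : ℚ)) =
    ((n+k-1).choose k : ℚ) * ((k:ℚ)/((n:ℚ)+j) * ((k-1).choose j : ℚ)) +
    ((n+k-1).choose k : ℚ) * ((k).choose j : ℚ) := by
  have h0 : (n:ℚ)+j ≠ 0 := by positivity
  have e1 : ((n+k).choose (k+1) : ℚ) * ((k:ℚ)+1) = ((n+k-1).choose k : ℚ) * ((n:ℚ)+k) := by
    have h := Nat.add_one_mul_choose_eq (n+k-1) k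
    have hnk : n + k - 1 + 1 = n + k := by omega
    rw [hnk] at h
    have := congrArg (fun m : ℕ => (m : ℚ)) h
    push_cast at this
    linarith
  have e2 : (k:ℚ) * ((k-1).choose j : ℚ) = ((k:ℚ) - j) * ((k).choose j : ℚ) := by
    rcases Nat.eq_zero_or_pos k with rfl | hk
    · interval_cases j; simp
    · have h := Nat.choose_mul_succ_eq (k-1) j
      have hk1 : k - 1 + 1 = k := by omega
      rw [hk1] at h
      have := congrArg (fun m : ℕ => (m : ℚ)) h
      push_cast [Nat.cast_sub hj] at this
      linarith
  field_simp
  linear_combination ((k.choose j : ℚ)) * e1 - (((n+k-1).choose k : ℚ)) * e2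

lemma topterm19 (n k : ℕ) : (k:ℚ)/((n:ℚ)+k) * ((k-1).choose k : ℚ) = 0 := by
  rcases Nat.eq_zero_or_pos k with rfl | hk
  · simp
  · rw [Nat.choose_eq_zero_of_lt (by omega : k - 1 < k)]
    simp

lemma main19 (n : ℕ) (hn : 1 ≤ n) : ∀ k : ℕ,
    Polynomial.C (((n + k - 1).choose k : ℚ)) *
      ∑ j ∈ Finset.range k,
        Polynomial.C ((k : ℚ) / (n + j) * ((k - 1).choose j : ℚ)) * Polynomial.X ^ j =
    ∑ j ∈ Finset.range k,
        Polynomial.C (((n + j - 1).choose j : ℚ)) * (1 + Polynomial.X) ^ j := by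
  intro k
  induction k with
  | zero => simp
  | succ k ih =>
    rw [Finset.sum_range_succ (f := fun j => Polynomial.C (((n + j - 1).choose j : ℚ)) * (1 + Polynomial.X) ^ j),
      ← ih]
    have hL : Polynomial.C (((n + k - 1).choose k : ℚ)) *
        ∑ j ∈ Finset.range k,
          Polynomial.C ((k : ℚ) / (n + j) * ((k - 1).choose j : ℚ)) * Polynomial.X ^ j =
        ∑ j ∈ Finset.range (k+1),
          Polynomial.C (((n + k - 1).choose k : ℚ) * ((k : ℚ) / (n + j) * ((k - 1).choose j : ℚ))) * Polynomial.X ^ j := by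
      rw [Finset.sum_range_succ, topterm19 n k]
      rw [Finset.mul_sum]
      simp [Polynomial.C_mul, mul_assoc]
    rw [hL, binom_expand19, Finset.mul_sum, Finset.mul_sum, ← Finset.sum_add_distrib]
    have hnk : n + (k+1) - 1 = n + k := by omega
    rw [hnk]
    refine Finset.sum_congr rfl fun j hj => ?_
    have hjk : j ≤ k := by
      have := Finset.mem_range.mp hj; omega
    simp only [Nat.add_sub_cancel]
    push_cast
    rw [← mul_assoc, ← Polynomial.C_mul, key19 n k j hn hjk, Polynomial.C_add, add_mul]
    simp only [Polynomial.C_mul]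
    ring

theorem stmt_19 (n k : ℕ) (hn : 1 ≤ n) (hk : 1 ≤ k) :
    Polynomial.C (((n + k - 1).choose k : ℚ)) *
      ∑ j ∈ Finset.range k,
        Polynomial.C ((k : ℚ) / (n + j) * ((k - 1).choose j : ℚ)) * Polynomial.X ^ j =
    ∑ j ∈ Finset.range k,
        Polynomial.C (((n + j - 1).choose j : ℚ)) * (1 + Polynomial.X) ^ j := by
  exact main19 n hn k
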